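/- All three cubic lattices in ℝ³ (fcc Γ_F, primitive Γ_P = ℤ³, bcc Γ_B, realized so that Γ_F ⊂ Γ_P ⊂ Γ_B with index 2 each) assign the same coincidence index to every R ∈ O(3,ℚ): Σ_F(R) = Σ_P(R) = Σ_B(R). -/

import Mathlib

/-- The standard hypercubic lattice `ℤ^d` inside `ℝ^d`. -/
def Zd (d : ℕ) : AddSubgroup (Fin d → ℝ) :=
  AddSubgroup.pi Set.univ fun _ => AddSubgroup.zmultiples (1 : ℝ)

/-- The dual lattice `Γ* = {x | ⟨x,y⟩ ∈ ℤ for all y ∈ Γ}`. -/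
def dualLattice {d : ℕ} (Γ : AddSubgroup (Fin d → ℝ)) : AddSubgroup (Fin d → ℝ) where
  carrier := {x | ∀ y ∈ Γ, ∃ n : ℤ, dotProduct x y = (n : ℝ)}
  zero_mem' := by
    intro y _
    exact ⟨0, by simp⟩
  add_mem' := by
    intro a b ha hb y hy
    obtain ⟨n, hn⟩ := ha y hy
    obtain ⟨m, hm⟩ := hb y hy
    exact ⟨n + m, by rw [add_dotProduct, hn, hm]; push_cast; ring⟩
  neg_mem' := by
    intro a ha y hy
    obtain ⟨n, hn⟩ := ha y hy
    exact ⟨-n, by rw [neg_dotProduct, hn]; push_cast; ring⟩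

/-- `Γ` is a (full-rank) lattice in `ℝ^d`: the `ℤ`-span of an `ℝ`-basis. -/
def IsLattice {d : ℕ} (Γ : AddSubgroup (Fin d → ℝ)) : Prop :=
  ∃ b : Module.Basis (Fin d) ℝ (Fin d → ℝ), Γ = (Submodule.span ℤ (Set.range ⇑b)).toAddSubgroup

/-- Two lattices are commensurate if their intersection has finite index in both. -/
def Commensurate {d : ℕ} (Γ₁ Γ₂ : AddSubgroup (Fin d → ℝ)) : Prop :=
  (Γ₁ ⊓ Γ₂).relIndex Γ₁ ≠ 0 ∧ (Γ₁ ⊓ Γ₂).relIndex Γ₂ ≠ 0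

/-- The image `RΓ` of a lattice under a matrix `R`. -/
def latmap {d : ℕ} (R : Matrix (Fin d) (Fin d) ℝ) (Γ : AddSubgroup (Fin d → ℝ)) :
    AddSubgroup (Fin d → ℝ) :=
  Γ.map R.mulVecLin.toAddMonoidHom

/-- The face-centred cubic lattice: integer vectors with even coordinate sum. -/
def GammaF : AddSubgroup (Fin 3 → ℝ) where
  carrier := {x | (∀ i, ∃ z : ℤ, x i = (z : ℝ)) ∧ ∃ z : ℤ, x 0 + x 1 + x 2 = 2 * (z : ℝ)}
  zero_mem' := ⟨fun _ => ⟨0, by simp⟩, ⟨0, by simp⟩⟩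
  add_mem' := by
    rintro a b ⟨ha, za, hza⟩ ⟨hb, zb, hzb⟩
    refine ⟨fun i => ?_, ⟨za + zb, ?_⟩⟩
    · obtain ⟨z, hz⟩ := ha i
      obtain ⟨w, hw⟩ := hb i
      exact ⟨z + w, by simp [hz, hw]⟩
    · have : (a + b) 0 + (a + b) 1 + (a + b) 2 = (a 0 + a 1 + a 2) + (b 0 + b 1 + b 2) := by
        simp [Pi.add_apply]; ring
      rw [this, hza, hzb]; push_cast; ring
  neg_mem' := by
    rintro a ⟨ha, za, hza⟩
    refine ⟨fun i => ?_, ⟨-za, ?_⟩⟩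
    · obtain ⟨z, hz⟩ := ha i
      exact ⟨-z, by simp [hz]⟩
    · have : (-a) 0 + (-a) 1 + (-a) 2 = -(a 0 + a 1 + a 2) := by simp; ring
      rw [this, hza]; push_cast; ring

/-- The body-centred cubic lattice: generated by `ℤ³` and `(1/2, 1/2, 1/2)`. -/
noncomputable def GammaB : AddSubgroup (Fin 3 → ℝ) :=
  Zd 3 ⊔ AddSubgroup.zmultiples ![(1 : ℝ)/2, 1/2, 1/2]


open Matrix

/-! ### Basic membership lemmas -/

lemma mem_Zd {x : Fin 3 → ℝ} : x ∈ Zd 3 ↔ ∀ i, ∃ z : ℤ, x i = (z : ℝ) := by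
  rw [Zd, AddSubgroup.mem_pi]
  refine ⟨fun h i => ?_, fun h i _ => ?_⟩
  · obtain ⟨z, hz⟩ := AddSubgroup.mem_zmultiples_iff.mp (h i (Set.mem_univ i))
    exact ⟨z, by rw [← hz]; simp⟩
  · obtain ⟨z, hz⟩ := h i
    exact AddSubgroup.mem_zmultiples_iff.mpr ⟨z, by rw [hz]; simp⟩

lemma coordZ {x : Fin 3 → ℝ} (hx : x ∈ Zd 3) (i : Fin 3) : x i = ((⌊x i⌋ : ℤ) : ℝ) := by
  obtain ⟨z, hz⟩ := mem_Zd.mp hx i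
  rw [hz, Int.floor_intCast]

lemma GammaF_le_Zd : GammaF ≤ Zd 3 := fun x hx => mem_Zd.mpr hx.1

lemma Zd_le_GammaB : Zd 3 ≤ GammaB := le_sup_left

noncomputable def cvec : Fin 3 → ℝ := ![(1 : ℝ)/2, 1/2, 1/2]

lemma cvec_apply (i : Fin 3) : cvec i = 1/2 := by
  fin_cases i <;> norm_num [cvec]

lemma vec_apply (i : Fin 3) : (![(1 : ℝ)/2, 1/2, 1/2] : Fin 3 → ℝ) i = 1/2 := by
  fin_cases i <;> norm_num

lemma mem_GammaB_iff {x : Fin 3 → ℝ} :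
    x ∈ GammaB ↔ ∃ (v : Fin 3 → ℤ) (k : ℤ), ∀ i, x i = (v i : ℝ) + (k : ℝ)/2 := by
  rw [GammaB, AddSubgroup.mem_sup]
  constructor
  · rintro ⟨y, hy, z, hz, rfl⟩
    obtain ⟨k, hk⟩ := AddSubgroup.mem_zmultiples_iff.mp hz
    refine ⟨fun i => ⌊y i⌋, k, fun i => ?_⟩
    have h1 : y i = ((⌊y i⌋ : ℤ) : ℝ) := coordZ hy i
    have h2 : z i = (k : ℝ)/2 := by
      rw [← hk, Pi.smul_apply, vec_apply, zsmul_eq_mul]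
      ring
    show y i + z i = _
    rw [h2]
    conv_lhs => rw [h1]
  · rintro ⟨v, k, hvk⟩
    refine ⟨fun i => (v i : ℝ), mem_Zd.mpr fun i => ⟨v i, rfl⟩,
      k • ![(1 : ℝ)/2, 1/2, 1/2], AddSubgroup.mem_zmultiples_iff.mpr ⟨k, rfl⟩, ?_⟩
    funext i
    have h2 : (k • ![(1 : ℝ)/2, 1/2, 1/2] : Fin 3 → ℝ) i = (k:ℝ) * (1/2) := by
      rw [Pi.smul_apply, vec_apply, zsmul_eq_mul]
    rw [Pi.add_apply, h2, hvk i]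
    ring

lemma two_mul_coordZ {x : Fin 3 → ℝ} (hx : x ∈ GammaB) (i : Fin 3) :
    2 * x i = ((⌊2 * x i⌋ : ℤ) : ℝ) := by
  obtain ⟨v, k, hvk⟩ := mem_GammaB_iff.mp hx
  have : 2 * x i = ((2 * v i + k : ℤ) : ℝ) := by rw [hvk i]; push_cast; ring
  rw [this, Int.floor_intCast]

/-! ### Orthogonality -/

variable {R : Matrix (Fin 3) (Fin 3) ℝ}

lemma RRT (hR : R ∈ Matrix.orthogonalGroup (Fin 3) ℝ) : R * Rᵀ = 1 := by
  have := (Matrix.mem_orthogonalGroup_iff (Fin 3) ℝ).mp hR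
  simpa using this

lemma RTR (hR : R ∈ Matrix.orthogonalGroup (Fin 3) ℝ) : Rᵀ * R = 1 := by
  have := (Matrix.mem_orthogonalGroup_iff' (Fin 3) ℝ).mp hR
  simpa using this

lemma RRTx (hR : R ∈ Matrix.orthogonalGroup (Fin 3) ℝ) (x : Fin 3 → ℝ) :
    R.mulVec (Rᵀ.mulVec x) = x := by
  rw [Matrix.mulVec_mulVec, RRT hR, Matrix.one_mulVec]

lemma norm_pres (hR : R ∈ Matrix.orthogonalGroup (Fin 3) ℝ) (x : Fin 3 → ℝ) :
    dotProduct (Rᵀ.mulVec x) (Rᵀ.mulVec x) = dotProduct x x := by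
  set u := Rᵀ.mulVec x with hu
  have hx : R.mulVec u = x := RRTx hR x
  conv_rhs => rw [← hx]
  rw [Matrix.dotProduct_mulVec, ← Matrix.mulVec_transpose]
  congr 1
  rw [hu, Matrix.mulVec_mulVec, RRT hR, Matrix.one_mulVec]

lemma mem_latmap (hR : R ∈ Matrix.orthogonalGroup (Fin 3) ℝ) {Γ : AddSubgroup (Fin 3 → ℝ)}
    {x : Fin 3 → ℝ} : x ∈ latmap R Γ ↔ Rᵀ.mulVec x ∈ Γ := by
  rw [latmap, AddSubgroup.mem_map]
  constructor
  · rintro ⟨y, hy, rfl⟩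
    simpa [Matrix.mulVecLin_apply, Matrix.mulVec_mulVec, RTR hR, Matrix.one_mulVec] using hy
  · intro h
    exact ⟨Rᵀ.mulVec x, h, by simp [Matrix.mulVecLin_apply, RRTx hR]⟩

lemma dot_three (x : Fin 3 → ℝ) :
    dotProduct x x = x 0 * x 0 + x 1 * x 1 + x 2 * x 2 := by
  simp [dotProduct, Fin.sum_univ_three]

/-! ### Parity and integrality steps -/

lemma parity_step (hR : R ∈ Matrix.orthogonalGroup (Fin 3) ℝ) {x : Fin 3 → ℝ}
    (hx : x ∈ GammaF) (hx' : Rᵀ.mulVec x ∈ Zd 3) : Rᵀ.mulVec x ∈ GammaF := by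
  obtain ⟨hxc, m, hm⟩ := hx
  set u := Rᵀ.mulVec x with hu
  have hxZ : x ∈ Zd 3 := mem_Zd.mpr hxc
  -- integer coordinates
  have hnorm := norm_pres hR x
  rw [← hu, dot_three, dot_three] at hnorm
  have hxi : ∀ i, x i = ((⌊x i⌋ : ℤ) : ℝ) := coordZ hxZ
  have hui : ∀ i, u i = ((⌊u i⌋ : ℤ) : ℝ) := coordZ hx'
  rw [hxi 0, hxi 1, hxi 2, hui 0, hui 1, hui 2] at hnorm
  have hZ : ⌊u 0⌋ * ⌊u 0⌋ + ⌊u 1⌋ * ⌊u 1⌋ + ⌊u 2⌋ * ⌊u 2⌋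
      = ⌊x 0⌋ * ⌊x 0⌋ + ⌊x 1⌋ * ⌊x 1⌋ + ⌊x 2⌋ * ⌊x 2⌋ := by exact_mod_cast hnorm
  have hsx : ⌊x 0⌋ + ⌊x 1⌋ + ⌊x 2⌋ = 2 * m := by
    have : ((⌊x 0⌋ + ⌊x 1⌋ + ⌊x 2⌋ : ℤ) : ℝ) = ((2 * m : ℤ) : ℝ) := by
      push_cast
      rw [← hxi 0, ← hxi 1, ← hxi 2]
      exact hm
    exact_mod_cast this
  have hsq : ∀ a : ZMod 2, a * a = a := by decide
  have h2 : ((⌊u 0⌋ + ⌊u 1⌋ + ⌊u 2⌋ : ℤ) : ZMod 2) = 0 := by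
    have c1 : ((⌊u 0⌋ * ⌊u 0⌋ + ⌊u 1⌋ * ⌊u 1⌋ + ⌊u 2⌋ * ⌊u 2⌋ : ℤ) : ZMod 2)
        = ((⌊x 0⌋ * ⌊x 0⌋ + ⌊x 1⌋ * ⌊x 1⌋ + ⌊x 2⌋ * ⌊x 2⌋ : ℤ) : ZMod 2) := by rw [hZ]
    push_cast at c1 ⊢
    rw [hsq, hsq, hsq, hsq, hsq, hsq] at c1
    rw [c1]
    have c2 := congrArg (fun r : ℤ => (r : ZMod 2)) hsx
    push_cast at c2
    rw [c2, show ((2 : ZMod 2)) = 0 from by decide, zero_mul]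
  obtain ⟨m', hm'⟩ := (ZMod.intCast_zmod_eq_zero_iff_dvd _ 2).mp h2
  refine ⟨mem_Zd.mp hx', ⟨m', ?_⟩⟩
  rw [hui 0, hui 1, hui 2]
  push_cast
  rw [show ((⌊u 0⌋ : ℝ) + ⌊u 1⌋ + ⌊u 2⌋) = ((⌊u 0⌋ + ⌊u 1⌋ + ⌊u 2⌋ : ℤ) : ℝ) by push_cast; ring,
    hm']
  push_cast; ring

lemma integrality_step (hR : R ∈ Matrix.orthogonalGroup (Fin 3) ℝ) {x : Fin 3 → ℝ}
    (hx : x ∈ Zd 3) (hx' : Rᵀ.mulVec x ∈ GammaB) : Rᵀ.mulVec x ∈ Zd 3 := by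
  set u := Rᵀ.mulVec x with hu
  obtain ⟨v, k, hvk⟩ := mem_GammaB_iff.mp hx'
  rcases Int.even_or_odd k with ⟨n, hn⟩ | ⟨n, hn⟩
  · refine mem_Zd.mpr fun i => ⟨v i + n, ?_⟩
    rw [hvk i, hn]; push_cast; ring
  · exfalso
    have hnorm := norm_pres hR x
    rw [← hu, dot_three, dot_three] at hnorm
    have hxi : ∀ i, x i = ((⌊x i⌋ : ℤ) : ℝ) := coordZ hx
    rw [hxi 0, hxi 1, hxi 2, hvk 0, hvk 1, hvk 2] at hnorm
    set z : Fin 3 → ℤ := fun i => ⌊x i⌋ with hz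
    have E : (2 * v 0 + k)^2 + (2 * v 1 + k)^2 + (2 * v 2 + k)^2
        = 4 * (z 0 ^ 2 + z 1 ^ 2 + z 2 ^ 2) := by
      have : (((2 * v 0 + k)^2 + (2 * v 1 + k)^2 + (2 * v 2 + k)^2 : ℤ) : ℝ)
          = ((4 * (z 0 ^ 2 + z 1 ^ 2 + z 2 ^ 2) : ℤ) : ℝ) := by
        push_cast
        linear_combination (4 : ℝ) * hnorm
      exact_mod_cast this
    rw [hn] at E
    have h3 : (3 : ℤ) = 4 * ((z 0 ^ 2 + z 1 ^ 2 + z 2 ^ 2)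
        - (v 0 ^ 2 + v 1 ^ 2 + v 2 ^ 2) - (2 * n + 1) * (v 0 + v 1 + v 2) - 3 * (n ^ 2 + n)) := by
      linear_combination E
    set t := (z 0 ^ 2 + z 1 ^ 2 + z 2 ^ 2)
        - (v 0 ^ 2 + v 1 ^ 2 + v 2 ^ 2) - (2 * n + 1) * (v 0 + v 1 + v 2) - 3 * (n ^ 2 + n)
    omega

/-! ### Homomorphisms to finite groups -/

noncomputable def phiP : ↥(Zd 3) →+ ZMod 2 where
  toFun x := ((⌊x.1 0⌋ + ⌊x.1 1⌋ + ⌊x.1 2⌋ : ℤ) : ZMod 2)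
  map_zero' := by norm_num
  map_add' a b := by
    have key : ∀ i, ⌊(a.1 + b.1) i⌋ = ⌊a.1 i⌋ + ⌊b.1 i⌋ := by
      intro i
      rw [Pi.add_apply]
      conv_lhs => rw [coordZ a.2 i, coordZ b.2 i]
      rw [show ((⌊a.1 i⌋ : ℤ) : ℝ) + ((⌊b.1 i⌋ : ℤ) : ℝ) = ((⌊a.1 i⌋ + ⌊b.1 i⌋ : ℤ) : ℝ) by
        push_cast; ring, Int.floor_intCast]
    show ((⌊(a.1 + b.1) 0⌋ + ⌊(a.1 + b.1) 1⌋ + ⌊(a.1 + b.1) 2⌋ : ℤ) : ZMod 2) = _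
    rw [key 0, key 1, key 2]
    push_cast
    ring

noncomputable def psiB : ↥GammaB →+ ZMod 2 where
  toFun x := ((⌊2 * x.1 0⌋ : ℤ) : ZMod 2)
  map_zero' := by norm_num
  map_add' a b := by
    have key : ⌊2 * (a.1 + b.1) 0⌋ = ⌊2 * a.1 0⌋ + ⌊2 * b.1 0⌋ := by
      rw [Pi.add_apply, mul_add]
      conv_lhs => rw [two_mul_coordZ a.2 0, two_mul_coordZ b.2 0]
      rw [show ((⌊2 * a.1 0⌋ : ℤ) : ℝ) + ((⌊2 * b.1 0⌋ : ℤ) : ℝ)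
          = ((⌊2 * a.1 0⌋ + ⌊2 * b.1 0⌋ : ℤ) : ℝ) by push_cast; ring, Int.floor_intCast]
    show ((⌊2 * (a.1 + b.1) 0⌋ : ℤ) : ZMod 2) = _
    rw [key]
    push_cast
    ring

noncomputable def thetaP (q : ℕ) : ↥(Zd 3) →+ (Fin 3 → ZMod q) where
  toFun x := fun i => ((⌊x.1 i⌋ : ℤ) : ZMod q)
  map_zero' := by funext i; norm_num
  map_add' a b := by
    funext i
    have key : ⌊(a.1 + b.1) i⌋ = ⌊a.1 i⌋ + ⌊b.1 i⌋ := by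
      rw [Pi.add_apply]
      conv_lhs => rw [coordZ a.2 i, coordZ b.2 i]
      rw [show ((⌊a.1 i⌋ : ℤ) : ℝ) + ((⌊b.1 i⌋ : ℤ) : ℝ) = ((⌊a.1 i⌋ + ⌊b.1 i⌋ : ℤ) : ℝ) by
        push_cast; ring, Int.floor_intCast]
    show ((⌊(a.1 + b.1) i⌋ : ℤ) : ZMod q) = _
    rw [key]
    push_cast
    rfl

noncomputable def thetaB (q : ℕ) : ↥GammaB →+ (Fin 3 → ZMod q) where
  toFun x := fun i => ((⌊2 * x.1 i⌋ : ℤ) : ZMod q)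
  map_zero' := by funext i; norm_num
  map_add' a b := by
    funext i
    have key : ⌊2 * (a.1 + b.1) i⌋ = ⌊2 * a.1 i⌋ + ⌊2 * b.1 i⌋ := by
      rw [Pi.add_apply, mul_add]
      conv_lhs => rw [two_mul_coordZ a.2 i, two_mul_coordZ b.2 i]
      rw [show ((⌊2 * a.1 i⌋ : ℤ) : ℝ) + ((⌊2 * b.1 i⌋ : ℤ) : ℝ)
          = ((⌊2 * a.1 i⌋ + ⌊2 * b.1 i⌋ : ℤ) : ℝ) by push_cast; ring, Int.floor_intCast]
    show ((⌊2 * (a.1 + b.1) i⌋ : ℤ) : ZMod q) = _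
    rw [key]
    push_cast
    rfl

/-! ### Kernel characterizations -/

lemma F_eq_ker : GammaF.addSubgroupOf (Zd 3) = phiP.ker := by
  ext x
  rw [AddSubgroup.mem_addSubgroupOf, AddMonoidHom.mem_ker]
  show x.1 ∈ GammaF ↔ ((⌊x.1 0⌋ + ⌊x.1 1⌋ + ⌊x.1 2⌋ : ℤ) : ZMod 2) = 0
  constructor
  · rintro ⟨hc, m, hm⟩
    have hsx : ⌊x.1 0⌋ + ⌊x.1 1⌋ + ⌊x.1 2⌋ = 2 * m := by
      have : ((⌊x.1 0⌋ + ⌊x.1 1⌋ + ⌊x.1 2⌋ : ℤ) : ℝ) = ((2 * m : ℤ) : ℝ) := by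
        push_cast
        rw [← coordZ x.2 0, ← coordZ x.2 1, ← coordZ x.2 2]
        exact hm
      exact_mod_cast this
    rw [hsx]
    push_cast
    rw [show ((2 : ZMod 2)) = 0 from by decide, zero_mul]
  · intro h
    obtain ⟨m, hm⟩ := (ZMod.intCast_zmod_eq_zero_iff_dvd _ 2).mp h
    refine ⟨mem_Zd.mp x.2, ⟨m, ?_⟩⟩
    rw [coordZ x.2 0, coordZ x.2 1, coordZ x.2 2]
    rw [show ((⌊x.1 0⌋ : ℝ) + ⌊x.1 1⌋ + ⌊x.1 2⌋) = ((⌊x.1 0⌋ + ⌊x.1 1⌋ + ⌊x.1 2⌋ : ℤ) : ℝ) by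
      push_cast; ring, hm]
    push_cast; ring

lemma P_eq_ker : (Zd 3).addSubgroupOf GammaB = psiB.ker := by
  ext x
  rw [AddSubgroup.mem_addSubgroupOf, AddMonoidHom.mem_ker]
  show x.1 ∈ Zd 3 ↔ ((⌊2 * x.1 0⌋ : ℤ) : ZMod 2) = 0
  obtain ⟨v, k, hvk⟩ := mem_GammaB_iff.mp x.2
  have hfloor : ⌊2 * x.1 0⌋ = 2 * v 0 + k := by
    rw [hvk 0, show 2 * ((v 0 : ℝ) + (k:ℝ)/2) = ((2 * v 0 + k : ℤ) : ℝ) by push_cast; ring,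
      Int.floor_intCast]
  rw [hfloor]
  constructor
  · intro h
    obtain ⟨z, hz⟩ := mem_Zd.mp h 0
    have : (k : ℝ) = ((2 * (z - v 0) : ℤ) : ℝ) := by
      have := hvk 0
      rw [hz] at this
      push_cast
      push_cast at this
      linarith
    have hk : k = 2 * (z - v 0) := by exact_mod_cast this
    rw [hk]
    push_cast
    rw [show ((2 : ZMod 2)) = 0 from by decide]
    ring
  · intro h
    obtain ⟨m, hm⟩ := (ZMod.intCast_zmod_eq_zero_iff_dvd _ 2).mp h
    have hk : k = 2 * (m - v 0) := by omega
    refine mem_Zd.mpr fun i => ⟨v i + (m - v 0), ?_⟩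
    rw [hvk i, hk]
    push_cast
    ring

/-! ### The abstract index lemma -/

lemma zmod2_cases (a : ZMod 2) : a = 0 ∨ a = 1 := by revert a; decide

lemma key_index {G : Type*} [AddGroup G] (φ : G →+ ZMod 2) (L' : AddSubgroup G)
    (hx : ∃ x ∈ L', φ x ≠ 0) :
    (L' ⊓ φ.ker).relIndex φ.ker = L'.index := by
  obtain ⟨x0, hx0L, hx0⟩ := hx
  have hx1 : φ x0 = 1 := (zmod2_cases (φ x0)).resolve_left hx0
  have hFind : φ.ker.index = 2 := by
    rw [AddSubgroup.index_ker]
    have hrange : φ.range = ⊤ := by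
      rw [AddSubgroup.eq_top_iff']
      intro a
      rcases zmod2_cases a with rfl | rfl
      · exact zero_mem _
      · exact ⟨x0, hx1⟩
    rw [hrange, Nat.card_congr AddSubgroup.topEquiv.toEquiv, Nat.card_zmod]
  have hKL2 : (L' ⊓ φ.ker).relIndex L' = 2 := by
    rw [AddSubgroup.relIndex, AddSubgroup.inf_addSubgroupOf_left]
    have : φ.ker.addSubgroupOf L' = (φ.comp L'.subtype).ker := by
      ext y
      simp [AddSubgroup.mem_addSubgroupOf, AddMonoidHom.mem_ker]
    rw [this, AddSubgroup.index_ker]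
    have hrange : (φ.comp L'.subtype).range = ⊤ := by
      rw [AddSubgroup.eq_top_iff']
      intro a
      rcases zmod2_cases a with rfl | rfl
      · exact zero_mem _
      · exact ⟨⟨x0, hx0L⟩, hx1⟩
    rw [hrange, Nat.card_congr AddSubgroup.topEquiv.toEquiv, Nat.card_zmod]
  have h1 := AddSubgroup.relIndex_mul_index (inf_le_left : L' ⊓ φ.ker ≤ L')
  have h2 := AddSubgroup.relIndex_mul_index (inf_le_right : L' ⊓ φ.ker ≤ φ.ker)
  rw [hKL2] at h1
  rw [hFind] at h2
  omega

/-! ### The odd denominator -/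

lemma rat_mul_den_int {q : ℚ} {n : ℕ} (h : q.den ∣ n) : ∃ z : ℤ, (n : ℝ) * (q : ℝ) = (z : ℝ) := by
  obtain ⟨m, hm⟩ := h
  refine ⟨m * q.num, ?_⟩
  have hden : ((q.den : ℝ)) ≠ 0 := by
    exact Nat.cast_ne_zero.mpr (Rat.den_pos q).ne'
  rw [Rat.cast_def, hm]
  push_cast
  field_simp

lemma sq3_even {a b c d : ℤ} (h : a^2 + b^2 + c^2 = 4*d) : Even a ∧ Even b ∧ Even c := by
  have h4 : ((a:ZMod 4))^2 + (b:ZMod 4)^2 + (c:ZMod 4)^2 = 0 := by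
    have hc := congrArg (fun z : ℤ => (z : ZMod 4)) h
    push_cast at hc
    rw [hc, show ((4:ZMod 4)) = 0 from by decide, zero_mul]
  have key : ∀ x y z : ZMod 4, x^2+y^2+z^2 = 0 →
      (x = 0 ∨ x = 2) ∧ (y = 0 ∨ y = 2) ∧ (z = 0 ∨ z = 2) := by decide
  have ev : ∀ a : ℤ, ((a:ZMod 4) = 0 ∨ (a:ZMod 4) = 2) → Even a := by
    intro a ha
    have h2 : ((a : ZMod 2)) = 0 := by
      have hmap := map_intCast (ZMod.castHom (show (2:ℕ) ∣ 4 by norm_num) (ZMod 2)) a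
      rcases ha with h | h
      · rw [← hmap, h, map_zero]
      · rw [← hmap, h]
        decide
    have := (ZMod.intCast_zmod_eq_zero_iff_dvd a 2).mp h2
    obtain ⟨k, hk⟩ := this
    exact ⟨k, by omega⟩
  obtain ⟨ha, hb, hc⟩ := key _ _ _ h4
  exact ⟨ev a ha, ev b hb, ev c hc⟩

lemma colsq (hR : R ∈ Matrix.orthogonalGroup (Fin 3) ℝ) {q : ℕ}
    {A : Matrix (Fin 3) (Fin 3) ℤ} (hA : ∀ i j, ((A i j : ℤ) : ℝ) = (q:ℝ) * R i j) (j : Fin 3) :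
    (A 0 j)^2 + (A 1 j)^2 + (A 2 j)^2 = (q:ℤ)^2 := by
  have hsum : R 0 j * R 0 j + R 1 j * R 1 j + R 2 j * R 2 j = 1 := by
    have h1 := congrFun (congrFun (RTR hR) j) j
    simp only [Matrix.mul_apply, Fin.sum_univ_three, Matrix.transpose_apply,
      Matrix.one_apply_eq] at h1
    exact h1
  have hreal : (((A 0 j)^2 + (A 1 j)^2 + (A 2 j)^2 : ℤ) : ℝ) = (((q:ℤ)^2 : ℤ) : ℝ) := by
    push_cast
    linear_combination ((A 0 j : ℝ) + q * R 0 j) * hA 0 j + ((A 1 j : ℝ) + q * R 1 j) * hA 1 j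
      + ((A 2 j : ℝ) + q * R 2 j) * hA 2 j + (q:ℝ)^2 * hsum
  exact_mod_cast hreal

lemma exists_odd_q (hR : R ∈ Matrix.orthogonalGroup (Fin 3) ℝ)
    (hrat : ∀ i j, ∃ q : ℚ, R i j = (q : ℝ)) :
    ∃ (q : ℕ) (A : Matrix (Fin 3) (Fin 3) ℤ), 0 < q ∧ Odd q ∧
      ∀ i j, ((A i j : ℤ) : ℝ) = (q:ℝ) * R i j := by
  classical
  have hex : ∃ n : ℕ, 0 < n ∧ ∀ i j, ∃ a : ℤ, (n:ℝ) * R i j = (a:ℝ) := by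
    refine ⟨∏ i : Fin 3, ∏ j : Fin 3, ((hrat i j).choose.den), ?_, fun i j => ?_⟩
    · apply Finset.prod_pos
      intro i _
      apply Finset.prod_pos
      intro j _
      exact (hrat i j).choose.pos
    · have hdvd : (hrat i j).choose.den ∣ ∏ i' : Fin 3, ∏ j' : Fin 3, ((hrat i' j').choose.den) := by
        refine dvd_trans ?_ (Finset.dvd_prod_of_mem _ (Finset.mem_univ i))
        exact Finset.dvd_prod_of_mem _ (Finset.mem_univ j)
      obtain ⟨z, hz⟩ := rat_mul_den_int hdvd
      exact ⟨z, by rw [(hrat i j).choose_spec]; exact hz⟩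
  set q := Nat.find hex with hqdef
  obtain ⟨hqpos, hq⟩ := Nat.find_spec hex
  choose A hA using hq
  have hA' : ∀ i j, ((A i j : ℤ) : ℝ) = (q:ℝ) * R i j := fun i j => (hA i j).symm
  refine ⟨q, Matrix.of A, hqpos, ?_, fun i j => hA' i j⟩
  by_contra hodd
  rw [Nat.odd_iff] at hodd
  obtain ⟨r, hr⟩ : 2 ∣ q := by omega
  have hrpos : 0 < r := by omega
  have hrlt : r < q := by omega
  -- every entry of A is even
  have heven : ∀ i j, Even (A i j) := by
    intro i j
    have hc := colsq hR hA' j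
    have h4 : (A 0 j)^2 + (A 1 j)^2 + (A 2 j)^2 = 4 * (r^2 : ℤ) := by
      rw [hc]
      have : (q:ℤ) = 2 * r := by exact_mod_cast hr
      rw [this]; ring
    obtain ⟨e0, e1, e2⟩ := sq3_even h4
    fin_cases i <;> assumption
  have : 0 < r ∧ ∀ i j, ∃ a : ℤ, (r:ℝ) * R i j = (a:ℝ) := by
    refine ⟨hrpos, fun i j => ?_⟩
    obtain ⟨b, hb⟩ := heven i j
    refine ⟨b, ?_⟩
    have h1 : ((A i j : ℤ) : ℝ) = (q:ℝ) * R i j := hA' i j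
    have h2 : ((A i j : ℤ) : ℝ) = 2 * (b:ℝ) := by rw [hb]; push_cast; ring
    have h3 : ((q:ℕ) : ℝ) = 2 * (r:ℝ) := by exact_mod_cast congrArg (Nat.cast : ℕ → ℝ) hr
    rw [h3] at h1
    rw [h2] at h1
    linarith
  exact Nat.find_min hex hrlt this

lemma colsum_odd (hR : R ∈ Matrix.orthogonalGroup (Fin 3) ℝ) {q : ℕ}
    {A : Matrix (Fin 3) (Fin 3) ℤ} (hA : ∀ i j, ((A i j : ℤ) : ℝ) = (q:ℝ) * R i j)
    (hqodd : Odd q) (j : Fin 3) : Odd (A 0 j + A 1 j + A 2 j) := by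
  have hc := colsq hR hA j
  have h2 : ((A 0 j + A 1 j + A 2 j : ℤ) : ZMod 2) = 1 := by
    have hcast := congrArg (fun z : ℤ => (z : ZMod 2)) hc
    push_cast at hcast
    have hsq : ∀ a : ZMod 2, a ^ 2 = a := by decide
    rw [hsq, hsq, hsq] at hcast
    obtain ⟨m, hm⟩ := id hqodd
    have hq2 : ((q : ℤ) : ZMod 2) = 1 := by
      have : (q : ℤ) = 2 * m + 1 := by exact_mod_cast hm
      rw [this]
      push_cast
      rw [show ((2 : ZMod 2)) = 0 from by decide]
      ring
    push_cast
    push_cast at hq2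
    rw [hcast, hq2]
    ring
  rw [Int.odd_iff]
  by_contra hmod
  have hdvd : (2:ℤ) ∣ (A 0 j + A 1 j + A 2 j) := by omega
  have h0 : ((A 0 j + A 1 j + A 2 j : ℤ) : ZMod 2) = 0 :=
    (ZMod.intCast_zmod_eq_zero_iff_dvd _ 2).mpr (by exact_mod_cast hdvd)
  rw [h0] at h2
  exact (by decide : ((0:ZMod 2)) ≠ 1) h2

lemma mulVecT_apply (M : Matrix (Fin 3) (Fin 3) ℝ) (v : Fin 3 → ℝ) (i : Fin 3) :
    (Mᵀ.mulVec v) i = M 0 i * v 0 + M 1 i * v 1 + M 2 i * v 2 := by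
  simp [Matrix.mulVec, dotProduct, Fin.sum_univ_three, Matrix.transpose_apply]

lemma ker_thetaP_le (hR : R ∈ Matrix.orthogonalGroup (Fin 3) ℝ) {q : ℕ}
    {A : Matrix (Fin 3) (Fin 3) ℤ} (hA : ∀ i j, ((A i j : ℤ) : ℝ) = (q:ℝ) * R i j) :
    (thetaP q).ker ≤ (Zd 3 ⊓ latmap R (Zd 3)).addSubgroupOf (Zd 3) := by
  intro x hx
  rw [AddMonoidHom.mem_ker] at hx
  rw [AddSubgroup.mem_addSubgroupOf, AddSubgroup.mem_inf]
  refine ⟨x.2, (mem_latmap hR).mpr (mem_Zd.mpr fun i => ?_)⟩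
  have hxdvd : ∀ j : Fin 3, (q:ℤ) ∣ ⌊x.1 j⌋ := by
    intro j
    have := congrFun hx j
    exact (ZMod.intCast_zmod_eq_zero_iff_dvd _ q).mp this
  choose u hu using hxdvd
  have hxj : ∀ j, x.1 j = ((q:ℝ)) * (u j : ℝ) := by
    intro j
    rw [coordZ x.2 j, hu j]
    push_cast
    ring
  refine ⟨A 0 i * u 0 + A 1 i * u 1 + A 2 i * u 2, ?_⟩
  rw [mulVecT_apply]
  push_cast
  linear_combination (R 0 i) * hxj 0 + (R 1 i) * hxj 1 + (R 2 i) * hxj 2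
    - (u 0 : ℝ) * hA 0 i - (u 1 : ℝ) * hA 1 i - (u 2 : ℝ) * hA 2 i

lemma ker_phiP_index : phiP.ker.index = 2 := by
  rw [AddSubgroup.index_ker]
  have hone : ((fun _ => 1 : Fin 3 → ℝ)) ∈ Zd 3 := mem_Zd.mpr fun i => ⟨1, by norm_num⟩
  have hval : phiP ⟨_, hone⟩ = 1 := by
    show ((⌊(1:ℝ)⌋ + ⌊(1:ℝ)⌋ + ⌊(1:ℝ)⌋ : ℤ) : ZMod 2) = 1
    rw [Int.floor_one]
    decide
  have hrange : phiP.range = ⊤ := by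
    rw [AddSubgroup.eq_top_iff']
    intro a
    rcases zmod2_cases a with rfl | rfl
    · exact zero_mem _
    · exact ⟨_, hval⟩
  rw [hrange, Nat.card_congr AddSubgroup.topEquiv.toEquiv, Nat.card_zmod]

lemma exists_odd_elem (hR : R ∈ Matrix.orthogonalGroup (Fin 3) ℝ) {q : ℕ} {m : ℕ}
    {A : Matrix (Fin 3) (Fin 3) ℤ} (hA : ∀ i j, ((A i j : ℤ) : ℝ) = (q:ℝ) * R i j)
    (hm : q = 2 * m + 1) :
    ∃ x : Fin 3 → ℝ, x ∈ GammaB ∧ x ∈ latmap R GammaB ∧ ⌊2 * x 0⌋ = 2 * (m:ℤ) + 1 := by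
  have hqodd : Odd q := ⟨m, by omega⟩
  have hs : ∀ j, Odd (A 0 j + A 1 j + A 2 j) := colsum_odd hR hA hqodd
  have ht : ∀ j, ∃ t : ℤ, 2 * t = (A 0 j + A 1 j + A 2 j) - (q:ℤ) := by
    intro j
    obtain ⟨c, hc⟩ := hs j
    refine ⟨c - m, ?_⟩
    have : (q:ℤ) = 2 * m + 1 := by exact_mod_cast hm
    omega
  choose t hts using ht
  set x : Fin 3 → ℝ := fun _ => (m:ℝ) + 1/2 with hxdef
  have hq0 : ((q:ℝ)) ≠ 0 := by
    have : 0 < q := by omega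
    exact_mod_cast this.ne'
  have hqR : ((q:ℝ)) = 2 * (m:ℝ) + 1 := by exact_mod_cast hm
  have htR : ∀ j, 2 * (t j : ℝ) = ((A 0 j : ℝ) + A 1 j + A 2 j) - (q:ℝ) := by
    intro j
    have := hts j
    have := congrArg (fun z : ℤ => (z : ℝ)) this
    push_cast at this
    linarith
  have hRx : ∀ i, (Rᵀ.mulVec x) i = ((t i + m : ℤ) : ℝ) + 1/2 := by
    intro i
    rw [mulVecT_apply]
    show R 0 i * ((m:ℝ) + 1/2) + R 1 i * ((m:ℝ) + 1/2) + R 2 i * ((m:ℝ) + 1/2) = _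
    push_cast
    have key : (q:ℝ) * (R 0 i * ((m:ℝ) + 1/2) + R 1 i * ((m:ℝ) + 1/2) + R 2 i * ((m:ℝ) + 1/2))
        = (q:ℝ) * (((t i : ℝ) + m) + 1/2) := by
      linear_combination (-((m:ℝ) + 1/2)) * (hA 0 i + hA 1 i + hA 2 i)
        - ((m:ℝ) + 1/2) * htR i - ((t i : ℝ)) * hqR
    exact mul_left_cancel₀ hq0 key
  have hxB : x ∈ GammaB := mem_GammaB_iff.mpr ⟨fun _ => (m:ℤ), 1, fun i => by
    show (m:ℝ) + 1/2 = ((m:ℤ):ℝ) + ((1:ℤ):ℝ)/2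
    push_cast; ring⟩
  have hRxB : Rᵀ.mulVec x ∈ GammaB := mem_GammaB_iff.mpr ⟨fun i => t i + m, 1, fun i => by
    rw [hRx i]; push_cast; ring⟩
  refine ⟨x, hxB, (mem_latmap hR).mpr hRxB, ?_⟩
  show ⌊2 * ((m:ℝ) + 1/2)⌋ = 2 * (m:ℤ) + 1
  rw [show 2 * ((m:ℝ) + 1/2) = ((2 * (m:ℤ) + 1 : ℤ) : ℝ) by push_cast; ring, Int.floor_intCast]

lemma inf_addSubgroupOf_distrib {G : Type*} [AddGroup G] (H K L : AddSubgroup G) :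
    (H ⊓ K).addSubgroupOf L = H.addSubgroupOf L ⊓ K.addSubgroupOf L := by
  ext y
  simp [AddSubgroup.mem_addSubgroupOf, AddSubgroup.mem_inf]

lemma inter_F (hR : R ∈ Matrix.orthogonalGroup (Fin 3) ℝ) :
    GammaF ⊓ latmap R GammaF = (Zd 3 ⊓ latmap R (Zd 3)) ⊓ GammaF := by
  ext x
  simp only [AddSubgroup.mem_inf, mem_latmap hR]
  constructor
  · rintro ⟨h1, h2⟩
    exact ⟨⟨GammaF_le_Zd h1, GammaF_le_Zd h2⟩, h1⟩
  · rintro ⟨⟨hP, hRP⟩, hF⟩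
    exact ⟨hF, parity_step hR hF hRP⟩

lemma inter_P (hR : R ∈ Matrix.orthogonalGroup (Fin 3) ℝ) :
    Zd 3 ⊓ latmap R (Zd 3) = (GammaB ⊓ latmap R GammaB) ⊓ Zd 3 := by
  ext x
  simp only [AddSubgroup.mem_inf, mem_latmap hR]
  constructor
  · rintro ⟨h1, h2⟩
    exact ⟨⟨Zd_le_GammaB h1, Zd_le_GammaB h2⟩, h1⟩
  · rintro ⟨⟨hB, hRB⟩, hP⟩
    exact ⟨hP, integrality_step hR hP hRB⟩

/-- All three cubic lattices (fcc `Γ_F ⊂ Γ_P = ℤ³ ⊂ Γ_B` bcc, each of index 2) assign the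
same coincidence index to every `R ∈ O(3,ℚ)`. -/
theorem stmt16 (R : Matrix (Fin 3) (Fin 3) ℝ)
    (hR : R ∈ Matrix.orthogonalGroup (Fin 3) ℝ)
    (hrat : ∀ i j, ∃ q : ℚ, R i j = (q : ℝ)) :
    (GammaF ⊓ latmap R GammaF).relIndex GammaF =
      (Zd 3 ⊓ latmap R (Zd 3)).relIndex (Zd 3) ∧
    (Zd 3 ⊓ latmap R (Zd 3)).relIndex (Zd 3) =
      (GammaB ⊓ latmap R GammaB).relIndex GammaB := by
  obtain ⟨q, A, hqpos, hqodd, hA⟩ := exists_odd_q hR hrat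
  haveI : NeZero q := ⟨hqpos.ne'⟩
  set L' := (Zd 3 ⊓ latmap R (Zd 3)).addSubgroupOf (Zd 3) with hL'def
  -- the index of L' is odd
  have hdvd1 : L'.index ∣ (thetaP q).ker.index :=
    AddSubgroup.index_dvd_of_le (ker_thetaP_le hR hA)
  have hker_index : (thetaP q).ker.index ∣ q^3 := by
    rw [AddSubgroup.index_ker]
    have h1 : Nat.card ↥(thetaP q).range ∣ Nat.card (Fin 3 → ZMod q) :=
      AddSubgroup.card_addSubgroup_dvd_card _
    have h2 : Nat.card (Fin 3 → ZMod q) = q^3 := by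
      rw [Nat.card_pi]
      simp [Nat.card_zmod, Finset.prod_const]
    rwa [h2] at h1
  have hoddL : Odd L'.index := by
    obtain ⟨c, hc⟩ := dvd_trans hdvd1 hker_index
    exact (Nat.odd_mul.mp (hc ▸ hqodd.pow)).1
  -- Goal 1
  have hS5 : ∃ x ∈ L', phiP x ≠ 0 := by
    by_contra hcon
    push_neg at hcon
    have hle : L' ≤ phiP.ker := fun y hy => AddMonoidHom.mem_ker.mpr (hcon y hy)
    have hmul := AddSubgroup.relIndex_mul_index hle
    rw [ker_phiP_index] at hmul
    rw [Nat.odd_iff] at hoddL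
    omega
  have goal1 : (GammaF ⊓ latmap R GammaF).relIndex GammaF =
      (Zd 3 ⊓ latmap R (Zd 3)).relIndex (Zd 3) := by
    rw [inter_F hR, ← AddSubgroup.relIndex_addSubgroupOf GammaF_le_Zd,
      inf_addSubgroupOf_distrib, F_eq_ker, ← hL'def, key_index phiP L' hS5]
    rfl
  -- Goal 2
  have hS6 : ∃ y ∈ (GammaB ⊓ latmap R GammaB).addSubgroupOf GammaB, psiB y ≠ 0 := by
    obtain ⟨m, hm⟩ := id hqodd
    obtain ⟨x, hxB, hxlat, hfl⟩ := exists_odd_elem hR hA hm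
    refine ⟨⟨x, hxB⟩, ?_, ?_⟩
    · rw [AddSubgroup.mem_addSubgroupOf]
      exact ⟨hxB, hxlat⟩
    · show ((⌊2 * x 0⌋ : ℤ) : ZMod 2) ≠ 0
      rw [hfl]
      push_cast
      rw [show ((2:ZMod 2)) = 0 from by decide]
      simp
  have goal2 : (Zd 3 ⊓ latmap R (Zd 3)).relIndex (Zd 3) =
      (GammaB ⊓ latmap R GammaB).relIndex GammaB := by
    rw [inter_P hR, ← AddSubgroup.relIndex_addSubgroupOf Zd_le_GammaB,
      inf_addSubgroupOf_distrib, P_eq_ker, key_index psiB _ hS6]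
    rfl
  exact ⟨goal1, goal2⟩
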